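/- The functions f_θ(s) = 2π(sqrt(1 + sinh²(s/2)/sin²(θ/2)) − 1), for finitely many distinct angles θ_1, ..., θ_n in (0, π], are linearly independent as functions on any interval (0, S) with S > 0: no nontrivial real linear combination vanishes identically on (0, S). -/

import Mathlib

open Real

/-- Vandermonde-type lemma: if all moments `∑ i, d i * x i ^ m` (for `m ≥ 1`) vanish,
with the `x i` distinct and nonzero, then all `d i` vanish. -/
lemma moments_zero {n : ℕ} (x d : Fin n → ℝ) (hx : Function.Injective x)
    (hx0 : ∀ i, x i ≠ 0)
    (h : ∀ m : ℕ, 1 ≤ m → ∑ i, d i * x i ^ m = 0) :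
    ∀ i, d i = 0 := by
  intro j
  set p : Polynomial ℝ :=
    Polynomial.X * ∏ i ∈ Finset.univ.erase j, (Polynomial.X - Polynomial.C (x i)) with hp
  have hc0 : p.coeff 0 = 0 := by
    rw [Polynomial.coeff_zero_eq_eval_zero]
    simp [hp]
  have hsum : ∑ i, d i * p.eval (x i) = 0 := by
    have he : ∀ i, p.eval (x i) =
        ∑ k ∈ Finset.range (p.natDegree + 1), p.coeff k * x i ^ k := by
      intro i
      rw [Polynomial.eval_eq_sum_range]
    simp_rw [he, Finset.mul_sum]
    rw [Finset.sum_comm]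
    apply Finset.sum_eq_zero
    intro k _
    rcases Nat.eq_zero_or_pos k with h0 | h1
    · subst h0; simp [hc0]
    · have hm := h k h1
      calc ∑ i, d i * (p.coeff k * x i ^ k)
          = p.coeff k * ∑ i, d i * x i ^ k := by
            rw [Finset.mul_sum]; congr 1; ext i; ring
        _ = 0 := by rw [hm, mul_zero]
  have hz : ∀ i ∈ Finset.univ, i ≠ j → d i * p.eval (x i) = 0 := by
    intro i _ hij
    have : p.eval (x i) = 0 := by
      rw [hp]
      simp only [Polynomial.eval_mul, Polynomial.eval_prod, Polynomial.eval_sub,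
        Polynomial.eval_X, Polynomial.eval_C]
      rw [Finset.prod_eq_zero (Finset.mem_erase.2 ⟨hij, Finset.mem_univ i⟩) (by ring)]
      ring
    rw [this, mul_zero]
  rw [Finset.sum_eq_single_of_mem j (Finset.mem_univ j) hz] at hsum
  have hne : p.eval (x j) ≠ 0 := by
    rw [hp]
    simp only [Polynomial.eval_mul, Polynomial.eval_prod, Polynomial.eval_sub,
      Polynomial.eval_X, Polynomial.eval_C]
    apply mul_ne_zero (hx0 j)
    apply Finset.prod_ne_zero_iff.2
    intro i hi
    exact sub_ne_zero.2 fun hcontra => (Finset.mem_erase.1 hi).1 (hx (hcontra.symm))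
  exact (mul_eq_zero.1 hsum).resolve_right hne

/-- Differentiation step: if `∑ i, c i * (1 + a i * u) ^ p` is constant on `(A, B)`
(with `0 ≤ A`, `a i > 0`, `p ≠ 0`), then differentiating gives that
`∑ i, (c i * a i) * (1 + a i * u) ^ (p - 1)` vanishes on `(A, B)`. -/
lemma deriv_step {n : ℕ} (a c : Fin n → ℝ) (ha : ∀ i, 0 < a i) {A B K : ℝ} (hA : 0 ≤ A)
    (p : ℝ) (hp : p ≠ 0)
    (h : ∀ u ∈ Set.Ioo A B, ∑ i, c i * (1 + a i * u) ^ p = K) :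
    ∀ u ∈ Set.Ioo A B, ∑ i, (c i * a i) * (1 + a i * u) ^ (p - 1) = 0 := by
  intro u hu
  have hupos : 0 < u := lt_of_le_of_lt hA hu.1
  have hpos : ∀ i, 0 < 1 + a i * u := fun i => by nlinarith [ha i]
  have hd : HasDerivAt (fun v => ∑ i, c i * (1 + a i * v) ^ p)
      (∑ i, (c i * a i * p) * (1 + a i * u) ^ (p - 1)) u := by
    apply HasDerivAt.fun_sum
    intro i _
    have h1 : HasDerivAt (fun v : ℝ => 1 + a i * v) (a i) u := by
      simpa using ((hasDerivAt_id u).const_mul (a i)).const_add 1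
    have h2 : HasDerivAt (fun x : ℝ => x ^ p) (p * (1 + a i * u) ^ (p - 1)) (1 + a i * u) :=
      Real.hasDerivAt_rpow_const (Or.inl (hpos i).ne')
    have h3 := (h2.comp u h1).const_mul (c i)
    refine h3.congr_deriv ?_
    ring
  have h0 : HasDerivAt (fun v => ∑ i, c i * (1 + a i * v) ^ p) 0 u := by
    have hev : (fun v => ∑ i, c i * (1 + a i * v) ^ p) =ᶠ[nhds u] fun _ => K := by
      filter_upwards [Ioo_mem_nhds hu.1 hu.2] with v hv using h v hv
    exact (hasDerivAt_const u K).congr_of_eventuallyEq hev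
  have heq := hd.unique h0
  have hfac : ∑ i, (c i * a i * p) * (1 + a i * u) ^ (p - 1)
      = p * ∑ i, (c i * a i) * (1 + a i * u) ^ (p - 1) := by
    rw [Finset.mul_sum]; congr 1; ext i; ring
  rw [hfac] at heq
  exact (mul_eq_zero.1 heq).resolve_left hp

/-- Core linear-independence statement after the substitution `u = sinh²(s/2)`,
`a = 1/sin²(θ/2)`: the functions `u ↦ √(1 + a u)` for distinct positive `a` are
linearly independent (together with constants) on `(0, U)`. -/
lemma aux_indep {n : ℕ} (a : Fin n → ℝ) (ha : ∀ i, 0 < a i) (ha_inj : Function.Injective a)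
    (U : ℝ) (hU : 0 < U) (c : Fin n → ℝ)
    (hG : ∀ u ∈ Set.Ioo (0:ℝ) U, ∑ i, c i * (1 + a i * u) ^ ((1:ℝ)/2) = ∑ i, c i) :
    ∀ i, c i = 0 := by
  have P : ∀ k : ℕ, ∀ u ∈ Set.Ioo (0:ℝ) U,
      ∑ i, (c i * a i ^ (k+1)) * (1 + a i * u) ^ ((1:ℝ)/2 - (k+1 : ℕ)) = 0 := by
    intro k
    induction k with
    | zero =>
      have hstep := deriv_step a c ha le_rfl ((1:ℝ)/2) (by norm_num) hG
      intro u hu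
      have h2 := hstep u hu
      rw [← h2]
      apply Finset.sum_congr rfl
      intro i _
      norm_num
    | succ k ih =>
      have hstep := deriv_step a (fun i => c i * a i ^ (k+1)) ha le_rfl
        ((1:ℝ)/2 - (k+1 : ℕ)) (by push_cast; intro hcon; nlinarith [Nat.cast_nonneg (α := ℝ) k]) ih
      intro u hu
      have h2 := hstep u hu
      rw [← h2]
      apply Finset.sum_congr rfl
      intro i _
      push_cast
      rw [pow_succ]
      ring_nf
  set u0 : ℝ := U / 2 with hu0_def
  have hu0 : u0 ∈ Set.Ioo (0:ℝ) U := ⟨by linarith, by linarith⟩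
  have ht : ∀ i, 0 < 1 + a i * u0 := fun i => by nlinarith [ha i, hu0.1]
  set d : Fin n → ℝ := fun i => c i * (1 + a i * u0) ^ ((1:ℝ)/2) with hd_def
  set x : Fin n → ℝ := fun i => a i / (1 + a i * u0) with hx_def
  have hx_inj : Function.Injective x := by
    intro i j hij
    rw [hx_def] at hij
    simp only at hij
    rw [div_eq_div_iff (ht i).ne' (ht j).ne'] at hij
    apply ha_inj
    nlinarith [hij]
  have hx0 : ∀ i, x i ≠ 0 := fun i => div_ne_zero (ha i).ne' (ht i).ne'
  have hmom : ∀ m : ℕ, 1 ≤ m → ∑ i, d i * x i ^ m = 0 := by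
    intro m hm
    obtain ⟨k, rfl⟩ : ∃ k, m = k + 1 := ⟨m - 1, (Nat.succ_pred_eq_of_pos hm).symm⟩
    have hP := P k u0 hu0
    rw [← hP]
    apply Finset.sum_congr rfl
    intro i _
    rw [hd_def, hx_def]
    simp only
    have hsplit : (1 + a i * u0) ^ ((1:ℝ)/2 - (k+1 : ℕ))
        = (1 + a i * u0) ^ ((1:ℝ)/2) * ((1 + a i * u0) ^ (k+1 : ℕ))⁻¹ := by
      rw [show (1:ℝ)/2 - ((k:ℕ)+1 : ℕ) = 1/2 + (-((k:ℕ)+1 : ℕ) : ℝ) by push_cast; ring,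
        Real.rpow_add (ht i), Real.rpow_neg (ht i).le, Real.rpow_natCast]
    rw [hsplit, div_pow]
    field_simp
  intro i
  have hd0 := moments_zero x d hx_inj hx0 hmom i
  rw [hd_def] at hd0
  simp only at hd0
  have := Real.rpow_pos_of_pos (ht i) ((1:ℝ)/2)
  exact (mul_eq_zero.1 hd0).resolve_right this.ne'

/-- The rotation-contribution functions
`f_θ(s) = 2π(√(1 + sinh²(s/2)/sin²(θ/2)) − 1)` for finitely many distinct angles
`θ i ∈ (0, π]` are linearly independent on any interval `(0, S)`. -/
theorem rotation_contributions_linearIndependent {n : ℕ} (θ : Fin n → ℝ)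
    (hθ : ∀ i, θ i ∈ Set.Ioc (0 : ℝ) π) (hθ_inj : Function.Injective θ)
    (S : ℝ) (hS : 0 < S) (c : Fin n → ℝ)
    (h : ∀ s ∈ Set.Ioo (0 : ℝ) S,
      ∑ i, c i *
        (2 * π * (Real.sqrt (1 + Real.sinh (s / 2) ^ 2 / Real.sin (θ i / 2) ^ 2) - 1)) = 0) :
    ∀ i, c i = 0 := by
  have hsinpos : ∀ i, 0 < Real.sin (θ i / 2) := by
    intro i
    apply Real.sin_pos_of_pos_of_lt_pi
    · linarith [(hθ i).1]
    · linarith [(hθ i).2, Real.pi_pos]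
  set a : Fin n → ℝ := fun i => (Real.sin (θ i / 2) ^ 2)⁻¹ with ha_def
  have ha : ∀ i, 0 < a i := fun i => inv_pos.2 (pow_pos (hsinpos i) 2)
  have ha_inj : Function.Injective a := by
    intro i j hij
    have h1 : Real.sin (θ i / 2) ^ 2 = Real.sin (θ j / 2) ^ 2 := inv_injective hij
    have h2 : Real.sin (θ i / 2) = Real.sin (θ j / 2) :=
      (sq_eq_sq₀ (hsinpos i).le (hsinpos j).le).1 h1
    have h3 : θ i / 2 = θ j / 2 := by
      apply Real.injOn_sin _ _ h2
      · constructor <;> [linarith [(hθ i).1, Real.pi_pos]; linarith [(hθ i).2]]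
      · constructor <;> [linarith [(hθ j).1, Real.pi_pos]; linarith [(hθ j).2]]
    exact hθ_inj (by linarith)
  set U : ℝ := Real.sinh (S / 2) ^ 2 with hU_def
  have hsinhS : 0 < Real.sinh (S / 2) := Real.sinh_pos_iff.2 (by linarith)
  have hU : 0 < U := pow_pos hsinhS 2
  apply aux_indep a ha ha_inj U hU c
  intro u hu
  set s : ℝ := 2 * Real.arsinh (Real.sqrt u) with hs_def
  have hsqrtpos : 0 < Real.sqrt u := Real.sqrt_pos.2 hu.1
  have hs1 : 0 < s := by
    have := Real.arsinh_pos_iff.2 hsqrtpos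
    linarith
  have hhalf : s / 2 = Real.arsinh (Real.sqrt u) := by rw [hs_def]; ring
  have hsinh : Real.sinh (s / 2) = Real.sqrt u := by rw [hhalf, Real.sinh_arsinh]
  have hs2 : s < S := by
    have hlt : Real.sqrt u < Real.sinh (S / 2) := by
      have := Real.sqrt_lt_sqrt hu.1.le hu.2
      rwa [hU_def, Real.sqrt_sq hsinhS.le] at this
    have : Real.arsinh (Real.sqrt u) < Real.arsinh (Real.sinh (S / 2)) :=
      Real.arsinh_lt_arsinh.2 hlt
    rw [Real.arsinh_sinh] at this
    linarith
  have hkey := h s ⟨hs1, hs2⟩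
  rw [hsinh] at hkey
  have hsq : Real.sqrt u ^ 2 = u := Real.sq_sqrt hu.1.le
  rw [hsq] at hkey
  have hterm : ∀ i, (1 : ℝ) + u / Real.sin (θ i / 2) ^ 2 = 1 + a i * u := by
    intro i
    rw [ha_def, div_eq_mul_inv, mul_comm]
  simp only [hterm] at hkey
  have hfact : ∑ i, c i * (2 * π * (Real.sqrt (1 + a i * u) - 1))
      = 2 * π * (∑ i, c i * Real.sqrt (1 + a i * u) - ∑ i, c i) := by
    rw [mul_sub, Finset.mul_sum, Finset.mul_sum, ← Finset.sum_sub_distrib]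
    congr 1; ext i; ring
  rw [hfact] at hkey
  have h2pi : (2 : ℝ) * π ≠ 0 := by positivity
  have hz := (mul_eq_zero.1 hkey).resolve_left h2pi
  have hfin : ∑ i, c i * Real.sqrt (1 + a i * u) = ∑ i, c i := by linarith [sub_eq_zero.1 hz]
  rw [← hfin]
  congr 1; ext i
  rw [Real.sqrt_eq_rpow]
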